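/- If φ ∈ ℕ^{p+1} is strictly increasing with φ_1 = 0 and φ_{j+1} = 2φ_j + 1 for all j, then φ_j = 2^{j-1} − 1, and the diagonal entries 2φ_j for j ∈ [p] are distinct from every off-diagonal entry φ_i + φ_j (i ≠ j) of the degree table. -/

import Mathlib

lemma two_pow_add_ne {a b k : ℕ} (h : a < b) : 2 ^ a + 2 ^ b ≠ 2 ^ k := by
  intro he
  have ha : 0 < 2 ^ a := Nat.pow_pos (by norm_num)
  have hab : 2 ^ a < 2 ^ b := Nat.pow_lt_pow_right (by norm_num) h
  have h1 : 2 ^ b < 2 ^ k := by omega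
  have h2 : 2 ^ k < 2 ^ (b + 1) := by rw [pow_succ]; omega
  have hb : b < k := (Nat.pow_lt_pow_iff_right (by norm_num : 1 < 2)).mp h1
  have hk : k < b + 1 := (Nat.pow_lt_pow_iff_right (by norm_num : 1 < 2)).mp h2
  omega

/-- If `φ ∈ ℕ^{p+1}` satisfies `φ 0 = 0` and `φ_{j+1} = 2 φ_j + 1`, then
`φ j = 2^j - 1`, and each diagonal entry `2 φ j` (for `j < p`) is distinct from
every off-diagonal entry `φ i + φ j'` (`i ≠ j'`) of the degree table. -/
theorem doubling_exponents_valid {p : ℕ} (φ : Fin (p + 1) → ℕ)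
    (h0 : φ 0 = 0)
    (hrec : ∀ j : Fin p, φ j.succ = 2 * φ j.castSucc + 1) :
    (∀ j : Fin (p + 1), φ j = 2 ^ (j : ℕ) - 1) ∧
    (∀ j : Fin (p + 1), (j : ℕ) < p →
      ∀ i j' : Fin (p + 1), i ≠ j' → 2 * φ j ≠ φ i + φ j') := by
  have hval : ∀ j : Fin (p + 1), φ j = 2 ^ (j : ℕ) - 1 := by
    intro j
    induction j using Fin.induction with
    | zero => simpa using h0
    | succ j ih =>
      rw [hrec j, ih]
      have : 0 < 2 ^ (j.castSucc : ℕ) := Nat.pow_pos (by norm_num)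
      simp only [Fin.val_succ, Fin.coe_castSucc, pow_succ] at this ⊢
      omega
  refine ⟨hval, ?_⟩
  intro j _ i j' hne heq
  rw [hval, hval, hval] at heq
  have hi : 0 < 2 ^ (i : ℕ) := Nat.pow_pos (by norm_num)
  have hj : 0 < 2 ^ (j : ℕ) := Nat.pow_pos (by norm_num)
  have hj' : 0 < 2 ^ (j' : ℕ) := Nat.pow_pos (by norm_num)
  have heq2 : 2 ^ (i : ℕ) + 2 ^ (j' : ℕ) = 2 ^ ((j : ℕ) + 1) := by
    rw [pow_succ]; omega
  have hne' : (i : ℕ) ≠ (j' : ℕ) := fun h => hne (Fin.ext h)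
  rcases lt_or_gt_of_ne hne' with h | h
  · exact two_pow_add_ne h heq2
  · exact two_pow_add_ne h (by rw [Nat.add_comm]; exact heq2)
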